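/- Let K be a centrally symmetric convex body in ℝⁿ and let x₁,…,x_m ∈ ℝⁿ, m ≥ 3, with 0 ∈ conv{x₁,…,x_m}, and suppose there exists p with p ∈ conv{x_{i₀},…,x_{j₀}} and −p ∈ conv{x_{j₀},…,x_{i₀}} (cyclic blocks, 1 ≤ i₀ < j₀ ≤ m). Then the K-length of the closed polygon x₁⋯x_m is at least ‖p−x_{i₀}‖_K + ‖x_{j₀}−p‖_K + ‖−p−x_{j₀}‖_K + ‖x_{i₀}+p‖_K. -/
import Mathlib


open Finset

variable {n : ℕ}

lemma gauge_convexOn {K : Set (EuclideanSpace ℝ (Fin n))} (hKconv : Convex ℝ K)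
    (habs : Absorbent ℝ K) (a b : EuclideanSpace ℝ (Fin n)) :
    ConvexOn ℝ Set.univ (fun q => gauge K (q - a) + gauge K (b - q)) := by
  refine ⟨convex_univ, ?_⟩
  intro u _ v _ s t hs ht hst
  have h1 : (s • u + t • v) - a = s • (u - a) + t • (v - a) := by
    match_scalars <;> linarith
  have h2 : b - (s • u + t • v) = s • (b - u) + t • (b - v) := by
    match_scalars <;> linarith
  simp only [h1, h2]
  have g1 := gauge_add_le hKconv habs (s • (u - a)) (t • (v - a))
  have g2 := gauge_add_le hKconv habs (s • (b - u)) (t • (b - v))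
  rw [gauge_smul_of_nonneg hs, gauge_smul_of_nonneg ht] at g1 g2
  simp only [smul_eq_mul] at g1 g2 ⊢
  linarith

/-- Telescoping subadditivity along a path. -/
lemma gauge_telescope {K : Set (EuclideanSpace ℝ (Fin n))} (hKconv : Convex ℝ K)
    (habs : Absorbent ℝ K) (y : ℕ → EuclideanSpace ℝ (Fin n)) (a : ℕ) :
    ∀ b, a ≤ b → gauge K (y b - y a) ≤ ∑ i ∈ Finset.Ico a b, gauge K (y (i + 1) - y i) := by
  refine Nat.le_induction ?_ ?_
  · simp
  · intro b hb ih
    rw [Finset.sum_Ico_succ_top hb]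
    calc gauge K (y (b + 1) - y a)
        ≤ gauge K (y b - y a) + gauge K (y (b + 1) - y b) := by
          have := gauge_add_le hKconv habs (y b - y a) (y (b + 1) - y b)
          simpa using this
      _ ≤ _ := by linarith

/-- Path inequality: if `p` lies in the convex hull of the vertices of a path,
the path length is at least the broken-line through `p`. -/
lemma gauge_path {K : Set (EuclideanSpace ℝ (Fin n))} (hKconv : Convex ℝ K)
    (habs : Absorbent ℝ K) (y : ℕ → EuclideanSpace ℝ (Fin n)) (a b : ℕ) (hab : a ≤ b)
    (p : EuclideanSpace ℝ (Fin n)) (hp : p ∈ convexHull ℝ (y '' Set.Icc a b)) :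
    gauge K (p - y a) + gauge K (y b - p) ≤ ∑ i ∈ Finset.Ico a b, gauge K (y (i + 1) - y i) := by
  obtain ⟨q, hq, hpq⟩ := (gauge_convexOn hKconv habs (y a) (y b)).exists_ge_of_mem_convexHull
    (Set.subset_univ _) hp
  obtain ⟨k, hk, rfl⟩ := hq
  calc gauge K (p - y a) + gauge K (y b - p) ≤ gauge K (y k - y a) + gauge K (y b - y k) := hpq
    _ ≤ (∑ i ∈ Finset.Ico a k, gauge K (y (i + 1) - y i))
        + ∑ i ∈ Finset.Ico k b, gauge K (y (i + 1) - y i) := by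
        gcongr
        · exact gauge_telescope hKconv habs y a k hk.1
        · exact gauge_telescope hKconv habs y k b hk.2
    _ = _ := Finset.sum_Ico_consecutive _ hk.1 hk.2

/-- The `K`-length of the closed polygon with vertices `x 0, …, x (m-1)`. -/
noncomputable def KLength {n : ℕ} (K : Set (EuclideanSpace ℝ (Fin n))) (m : ℕ)
    (x : ℕ → EuclideanSpace ℝ (Fin n)) : ℝ :=
  ∑ i ∈ Finset.range m, gauge K (x ((i + 1) % m) - x i)

/-- If `0 ∈ conv{x 0, …, x (m-1)}` (`m ≥ 3`) and there are indices `i₀ < j₀ < m` and a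
point `p` with `p` in the convex hull of the cyclic block `x i₀, …, x j₀` and `-p` in
the convex hull of the complementary cyclic block `x j₀, …, x (m-1), x 0, …, x i₀`,
then the `K`-length of the closed polygon is at least
`‖p − x i₀‖_K + ‖x j₀ − p‖_K + ‖−p − x j₀‖_K + ‖x i₀ + p‖_K`. -/
theorem stmt8 {n m : ℕ} (K : Set (EuclideanSpace ℝ (Fin n)))
    (hKconv : Convex ℝ K) (hKcpt : IsCompact K) (hK0 : (0 : EuclideanSpace ℝ (Fin n)) ∈ interior K)
    (hKsymm : K = -K) (hm : 3 ≤ m)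
    (x : ℕ → EuclideanSpace ℝ (Fin n))
    (h0 : (0 : EuclideanSpace ℝ (Fin n)) ∈ convexHull ℝ (x '' Set.Iio m))
    (i₀ j₀ : ℕ) (hij : i₀ < j₀) (hjm : j₀ < m) (p : EuclideanSpace ℝ (Fin n))
    (hp : p ∈ convexHull ℝ (x '' Set.Icc i₀ j₀))
    (hmp : -p ∈ convexHull ℝ (x '' (Set.Icc j₀ (m - 1) ∪ Set.Icc 0 i₀))) :
    gauge K (p - x i₀) + gauge K (x j₀ - p) + gauge K (-p - x j₀) + gauge K (x i₀ + p)
      ≤ KLength K m x := by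
  rw [KLength]
  have habs : Absorbent ℝ K := absorbent_nhds_zero (mem_interior_iff_mem_nhds.mp hK0)
  set f : ℕ → ℝ := fun i => gauge K (x ((i + 1) % m) - x i) with hf
  -- Block 1
  have hB1 : gauge K (p - x i₀) + gauge K (x j₀ - p) ≤ ∑ i ∈ Finset.Ico i₀ j₀, f i := by
    have := gauge_path hKconv habs x i₀ j₀ hij.le p hp
    refine this.trans_eq (Finset.sum_congr rfl fun i hi => ?_)
    simp only [Finset.mem_Ico] at hi
    simp [hf, Nat.mod_eq_of_lt (by omega : i + 1 < m)]
  -- Block 2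
  set L : ℕ := m - j₀ + i₀ with hL
  set y : ℕ → EuclideanSpace ℝ (Fin n) := fun i => x ((j₀ + i) % m) with hy
  have hy0 : y 0 = x j₀ := by simp [hy, Nat.mod_eq_of_lt hjm]
  have hyL : y L = x i₀ := by
    simp only [hy, hL]
    rw [show j₀ + (m - j₀ + i₀) = m + i₀ by omega, Nat.add_mod_left,
      Nat.mod_eq_of_lt (by omega)]
  have hsub : x '' (Set.Icc j₀ (m - 1) ∪ Set.Icc 0 i₀) ⊆ y '' Set.Icc 0 L := by
    rintro z ⟨k, hk | hk, rfl⟩ <;> rw [Set.mem_Icc] at hk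
    · exact ⟨k - j₀, ⟨Nat.zero_le _, by omega⟩, by
        simp only [hy]; rw [show j₀ + (k - j₀) = k by omega, Nat.mod_eq_of_lt (by omega)]⟩
    · exact ⟨m - j₀ + k, ⟨Nat.zero_le _, by omega⟩, by
        simp only [hy]; rw [show j₀ + (m - j₀ + k) = m + k by omega, Nat.add_mod_left,
          Nat.mod_eq_of_lt (by omega)]⟩
  have hB2 : gauge K (-p - x j₀) + gauge K (x i₀ + p)
      ≤ ∑ i ∈ Finset.Ico 0 i₀, f i + ∑ i ∈ Finset.Ico j₀ m, f i := by
    have hpath := gauge_path hKconv habs y 0 L (Nat.zero_le _) (-p)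
      (convexHull_mono hsub hmp)
    rw [hy0, hyL] at hpath
    have hxp : x i₀ - -p = x i₀ + p := by abel
    rw [hxp] at hpath
    refine hpath.trans_eq ?_
    have hsplit : ∑ i ∈ Finset.Ico 0 L, gauge K (y (i + 1) - y i)
        = ∑ i ∈ Finset.Ico 0 (m - j₀), gauge K (y (i + 1) - y i)
          + ∑ i ∈ Finset.Ico (m - j₀) L, gauge K (y (i + 1) - y i) :=
      (Finset.sum_Ico_consecutive _ (Nat.zero_le _) (by omega)).symm
    rw [hsplit]
    have e1 : ∑ i ∈ Finset.Ico (m - j₀) L, gauge K (y (i + 1) - y i)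
        = ∑ i ∈ Finset.Ico 0 i₀, f i := by
      rw [Finset.sum_Ico_eq_sum_range, Finset.sum_Ico_eq_sum_range]
      rw [show L - (m - j₀) = i₀ by omega]
      refine Finset.sum_congr rfl fun i hi => ?_
      simp only [Finset.mem_range] at hi
      simp only [hy, hf]
      rw [show j₀ + (m - j₀ + i + 1) = m + (i + 1) by omega,
        show j₀ + (m - j₀ + i) = m + i by omega, Nat.add_mod_left, Nat.add_mod_left,
        Nat.mod_eq_of_lt (show i < m by omega), Nat.zero_add]
    have e2 : ∑ i ∈ Finset.Ico 0 (m - j₀), gauge K (y (i + 1) - y i)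
        = ∑ i ∈ Finset.Ico j₀ m, f i := by
      rw [Finset.sum_Ico_eq_sum_range, Finset.sum_Ico_eq_sum_range]
      rw [show m - j₀ - 0 = m - j₀ by omega]
      refine Finset.sum_congr rfl fun i hi => ?_
      simp only [Finset.mem_range] at hi
      simp only [hy, hf]
      rw [Nat.zero_add, show j₀ + (i + 1) = j₀ + i + 1 by omega,
        Nat.mod_eq_of_lt (show j₀ + i < m by omega)]
    rw [e1, e2]
    ring
  -- Assemble
  have hsum : ∑ i ∈ Finset.range m, f i
      = ∑ i ∈ Finset.Ico 0 i₀, f i + ∑ i ∈ Finset.Ico i₀ j₀, f i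
        + ∑ i ∈ Finset.Ico j₀ m, f i := by
    rw [Finset.range_eq_Ico, ← Finset.sum_Ico_consecutive f (Nat.zero_le i₀) (by omega : i₀ ≤ m),
      ← Finset.sum_Ico_consecutive f (le_of_lt hij) (le_of_lt hjm)]
    ring
  rw [hsum]
  linarith
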